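/- arXiv:1805.07541 — 3 statements merged into one kernel-verified Lean document; each statement's English description precedes it below -/
import Mathlib

section
/- Let W be a real d×m matrix, let r be a positive real number, and set r̂ = 2r/(r+1). Then the infimum, over all m×m real symmetric positive definite matrices Ω satisfying tr(Ω^r) ≤ 1, of tr(Ω⁻¹ WᵀW) equals (Σᵢ σᵢ(W)^{r̂})^{2/r̂}, i.e. the squared Schatten r̂-norm of W, where σᵢ(W) are the singular values of W. -/
open Matrix

/-- `Wᵀ * W` is Hermitian (symmetric) for a real matrix `W`. -/
lemma isHermitian_transpose_mul {d m : ℕ} (W : Matrix (Fin d) (Fin m) ℝ) :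
    (Wᵀ * W).IsHermitian := by
  simpa using W.isHermitian_conjTranspose_mul_self

/-- The singular values of a real `d × m` matrix `W`: the square roots of the
eigenvalues of the symmetric positive semidefinite matrix `Wᵀ * W`. -/
noncomputable def singVal {d m : ℕ} (W : Matrix (Fin d) (Fin m) ℝ) (i : Fin m) : ℝ :=
  Real.sqrt ((isHermitian_transpose_mul W).eigenvalues i)

/-- The real power `A ^ p` of a (symmetric) matrix, defined through the spectral
decomposition, i.e. by applying `t ↦ t ^ p` to the eigenvalues (continuous functional
calculus). -/
noncomputable def mpow {m : ℕ} (A : Matrix (Fin m) (Fin m) ℝ) (p : ℝ) :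
    Matrix (Fin m) (Fin m) ℝ :=
  cfc (fun t : ℝ => t ^ p) A

/-! ### Auxiliary lemmas -/

lemma contOn_finite {s : Set ℝ} (hs : s.Finite) (f : ℝ → ℝ) : ContinuousOn f s := by
  rw [continuousOn_iff_continuous_restrict]
  have : Finite s := hs
  exact continuous_of_discreteTopology

lemma cfc_trace {m : ℕ} (A : Matrix (Fin m) (Fin m) ℝ) (hA : A.IsHermitian) (f : ℝ → ℝ) :
    (cfc f A).trace = ∑ i, f (hA.eigenvalues i) := by
  rw [hA.cfc_eq, Matrix.IsHermitian.cfc, Unitary.conjStarAlgAut_apply, Matrix.trace_mul_cycle,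
    Unitary.coe_star_mul_self, one_mul, trace_diagonal]
  simp

lemma spec_real {m : ℕ} (A : Matrix (Fin m) (Fin m) ℝ) (hA : A.IsHermitian) :
    A = (hA.eigenvectorUnitary : Matrix (Fin m) (Fin m) ℝ) * diagonal hA.eigenvalues
        * star (hA.eigenvectorUnitary : Matrix (Fin m) (Fin m) ℝ) := by
  simpa using hA.spectral_theorem

lemma trace_conj_diag {m : ℕ} (V : Matrix (Fin m) (Fin m) ℝ)
    (hV : star V * V = 1) (v : Fin m → ℝ) :
    (V * diagonal v * star V).trace = ∑ i, v i := by
  rw [Matrix.trace_mul_cycle, hV, one_mul, trace_diagonal]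

lemma conj_diag_inv {m : ℕ} (V : Matrix (Fin m) (Fin m) ℝ)
    (hV : V ∈ unitary (Matrix (Fin m) (Fin m) ℝ))
    (v : Fin m → ℝ) (hv : ∀ i, v i ≠ 0) :
    (V * diagonal v * star V)⁻¹ = V * diagonal (fun i => (v i)⁻¹) * star V := by
  apply Matrix.inv_eq_left_inv
  have h1 : star V * V = 1 := Unitary.star_mul_self_of_mem hV
  calc V * diagonal (fun i => (v i)⁻¹) * star V * (V * diagonal v * star V)
      = V * (diagonal (fun i => (v i)⁻¹) * (star V * V) * diagonal v) * star V := by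
        noncomm_ring
    _ = 1 := by
        rw [h1, mul_one, diagonal_mul_diagonal]
        simp [inv_mul_cancel₀, hv, Unitary.mul_star_self_of_mem hV]

lemma trace_diagonal_mul' {m : ℕ} (v : Fin m → ℝ) (M : Matrix (Fin m) (Fin m) ℝ) :
    (diagonal v * M).trace = ∑ i, v i * M i i := by
  simp [Matrix.trace, Matrix.diag, Matrix.mul_apply, Matrix.diagonal_apply, Finset.sum_ite_eq]

lemma conj_diag_entry {m : ℕ} (U : Matrix (Fin m) (Fin m) ℝ) (v : Fin m → ℝ) (i k : Fin m) :
    (U * diagonal v * star U) i k = ∑ j, U i j * v j * U k j := by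
  simp [Matrix.mul_apply, Matrix.diagonal_apply, Matrix.star_apply, Finset.sum_mul]

lemma row_sq_sum {m : ℕ} (Q : Matrix (Fin m) (Fin m) ℝ) (hQ : Q * star Q = 1) (i : Fin m) :
    ∑ j, (Q i j)^2 = 1 := by
  have := congrFun (congrFun hQ i) i
  simpa [Matrix.mul_apply, Matrix.star_apply, Matrix.one_apply, sq] using this

lemma col_sq_sum {m : ℕ} (Q : Matrix (Fin m) (Fin m) ℝ) (hQ : star Q * Q = 1) (j : Fin m) :
    ∑ i, (Q i j)^2 = 1 := by
  have := congrFun (congrFun hQ j) j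
  simpa [Matrix.mul_apply, Matrix.star_apply, Matrix.one_apply, sq] using this

lemma jensen_rpow {ι : Type*} [Fintype ι] {w lam : ι → ℝ} {s : ℝ} (hs0 : 0 < s) (hs1 : s ≤ 1)
    (hw : ∀ i, 0 ≤ w i) (hl : ∀ i, 0 ≤ lam i) (hw1 : ∑ i, w i = 1) :
    ∑ i, w i * lam i ^ s ≤ (∑ i, w i * lam i) ^ s := by
  have h := Real.inner_le_weight_mul_Lp_of_nonneg Finset.univ
    (p := 1/s) (by rw [le_div_iff₀ hs0]; linarith) w (fun i => lam i ^ s) hw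
    (fun i => Real.rpow_nonneg (hl i) s)
  simp only [hw1, one_div, inv_inv] at h
  calc ∑ i, w i * lam i ^ s
      ≤ (1:ℝ) ^ (1 - s⁻¹⁻¹) * (∑ i, w i * (lam i ^ s) ^ s⁻¹) ^ s := by
        simpa using h
    _ = (∑ i, w i * lam i) ^ s := by
        rw [Real.one_rpow, one_mul]
        congr 1
        refine Finset.sum_congr rfl fun i _ => ?_
        rw [← Real.rpow_mul (hl i), mul_inv_cancel₀ hs0.ne', Real.rpow_one]

lemma hoelder_step {ι : Type*} [Fintype ι] {b d : ι → ℝ} {r s : ℝ} (hr : 0 < r)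
    (hs : s = r / (r + 1))
    (hb : ∀ i, 0 ≤ b i) (hd : ∀ i, 0 < d i) (hsum : ∑ i, d i ^ r ≤ 1) :
    (∑ i, b i ^ s) ^ (1/s) ≤ ∑ i, b i / d i := by
  have hr1 : (0:ℝ) < r + 1 := by linarith
  have hs0 : 0 < s := by rw [hs]; positivity
  have hs1 : s < 1 := by rw [hs, div_lt_one hr1]; linarith
  have hconj : Real.HolderConjugate (1/s) (1/(1-s)) := by
    rw [Real.holderConjugate_iff]; constructor
    · rw [lt_div_iff₀ hs0]; linarith
    · rw [one_div, one_div, inv_inv, inv_inv]; ring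
  have key : ∑ i, b i ^ s ≤ (∑ i, b i / d i) ^ s * (∑ i, d i ^ r) ^ (1-s) := by
    have h := Real.inner_le_Lp_mul_Lq_of_nonneg hconj (s := Finset.univ)
      (f := fun i => (b i / d i) ^ s) (g := fun i => d i ^ s)
      (fun i _ => Real.rpow_nonneg (div_nonneg (hb i) (hd i).le) s)
      (fun i _ => Real.rpow_nonneg (hd i).le s)
    have e1 : ∀ i, (b i / d i) ^ s * d i ^ s = b i ^ s := by
      intro i
      rw [← Real.mul_rpow (div_nonneg (hb i) (hd i).le) (hd i).le,
        div_mul_cancel₀ _ (hd i).ne']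
    have e2 : ∀ i, ((b i / d i) ^ s) ^ (1/s : ℝ) = b i / d i := by
      intro i
      rw [← Real.rpow_mul (div_nonneg (hb i) (hd i).le), mul_one_div, div_self hs0.ne',
        Real.rpow_one]
    have e3 : ∀ i, (d i ^ s) ^ (1/(1-s) : ℝ) = d i ^ r := by
      intro i
      rw [← Real.rpow_mul (hd i).le]
      congr 1
      rw [hs]
      field_simp
      ring
    simp only [e1, e2, e3] at h
    calc ∑ i, b i ^ s
        ≤ (∑ i, b i / d i) ^ (1/(1/s) : ℝ) * (∑ i, d i ^ r) ^ (1/(1/(1-s)) : ℝ) := by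
          simpa using h
      _ = (∑ i, b i / d i) ^ s * (∑ i, d i ^ r) ^ (1-s) := by
          rw [one_div_one_div, one_div_one_div]
  have h2 : ∑ i, b i ^ s ≤ (∑ i, b i / d i) ^ s := by
    refine key.trans ?_
    have hbd : (0:ℝ) ≤ ∑ i, b i / d i := Finset.sum_nonneg fun i _ => div_nonneg (hb i) (hd i).le
    have h1 : (∑ i, d i ^ r) ^ (1-s) ≤ 1 := by
      apply Real.rpow_le_one (Finset.sum_nonneg fun i _ => Real.rpow_nonneg (hd i).le r) hsum
      linarith
    calc (∑ i, b i / d i) ^ s * (∑ i, d i ^ r) ^ (1-s)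
        ≤ (∑ i, b i / d i) ^ s * 1 :=
          mul_le_mul_of_nonneg_left h1 (Real.rpow_nonneg hbd s)
      _ = (∑ i, b i / d i) ^ s := mul_one _
  calc (∑ i, b i ^ s) ^ (1/s)
      ≤ ((∑ i, b i / d i) ^ s) ^ (1/s : ℝ) :=
        Real.rpow_le_rpow (Finset.sum_nonneg fun i _ => Real.rpow_nonneg (hb i) s) h2
          (by positivity)
    _ = ∑ i, b i / d i := by
        rw [← Real.rpow_mul (Finset.sum_nonneg fun i _ => div_nonneg (hb i) (hd i).le),
          mul_one_div, div_self hs0.ne', Real.rpow_one]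

lemma eig_rpow_le_diag_rpow {m : ℕ} (A U : Matrix (Fin m) (Fin m) ℝ) (hA : A.IsHermitian)
    (hl : ∀ j, 0 ≤ hA.eigenvalues j) (hU : U ∈ unitary (Matrix (Fin m) (Fin m) ℝ))
    {s : ℝ} (hs0 : 0 < s) (hs1 : s ≤ 1) :
    ∑ j, hA.eigenvalues j ^ s ≤ ∑ i, ((star U * A * U) i i) ^ s := by
  set V : Matrix (Fin m) (Fin m) ℝ := (hA.eigenvectorUnitary : Matrix (Fin m) (Fin m) ℝ) with hV
  set Q : Matrix (Fin m) (Fin m) ℝ := star U * V with hQdef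
  have hVmem : V ∈ unitary (Matrix (Fin m) (Fin m) ℝ) := SetLike.coe_mem _
  have hQ1 : Q * star Q = 1 := by
    rw [hQdef, StarMul.star_mul, star_star, mul_assoc, ← mul_assoc V,
      Unitary.mul_star_self_of_mem hVmem, one_mul, Unitary.star_mul_self_of_mem hU]
  have hQ2 : star Q * Q = 1 := by
    rw [hQdef, StarMul.star_mul, star_star, mul_assoc, ← mul_assoc U,
      Unitary.mul_star_self_of_mem hU, one_mul, Unitary.star_mul_self_of_mem hVmem]
  have hconj : star U * A * U = Q * diagonal hA.eigenvalues * star Q := by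
    conv_lhs => rw [spec_real A hA]
    rw [hQdef, StarMul.star_mul, star_star]
    simp only [← hV, mul_assoc]
  have hentry : ∀ i, (star U * A * U) i i = ∑ j, (Q i j)^2 * hA.eigenvalues j := by
    intro i
    rw [hconj, conj_diag_entry]
    congr 1; ext j; ring
  calc ∑ j, hA.eigenvalues j ^ s
      = ∑ j, (∑ i, (Q i j)^2) * hA.eigenvalues j ^ s := by
        refine Finset.sum_congr rfl fun j _ => ?_
        rw [col_sq_sum Q hQ2, one_mul]
    _ = ∑ i, ∑ j, (Q i j)^2 * hA.eigenvalues j ^ s := by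
        rw [Finset.sum_comm]
        simp_rw [Finset.sum_mul]
    _ ≤ ∑ i, ((star U * A * U) i i) ^ s := by
        refine Finset.sum_le_sum fun i _ => ?_
        rw [hentry i]
        exact jensen_rpow hs0 hs1 (fun j => sq_nonneg _) hl (row_sq_sum Q hQ1 i)

lemma posDef_of_posSemidef_isUnit {m : ℕ} {A : Matrix (Fin m) (Fin m) ℝ}
    (hP : A.PosSemidef) (hU : IsUnit A) : A.PosDef := by
  exact hP.posDef_iff_isUnit.mpr hU

/-- the diagonal entries of `star U * (Wᵀ W) * U` are nonnegative -/
lemma diag_conj_nonneg {d m : ℕ} (W : Matrix (Fin d) (Fin m) ℝ)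
    (U : Matrix (Fin m) (Fin m) ℝ) (i : Fin m) :
    0 ≤ (star U * (Wᵀ * W) * U) i i := by
  have h : star U * (Wᵀ * W) * U = (W * U)ᴴ * (W * U) := by
    rw [conjTranspose_mul, star_eq_conjTranspose]
    have h2 : Wᴴ = Wᵀ := conjTranspose_eq_transpose_of_trivial W
    rw [h2]
    simp only [Matrix.mul_assoc]
  rw [h]
  have h3 : ((W * U)ᴴ * (W * U)) i i = ∑ k, ((W * U) k i)^2 := by
    simp only [Matrix.mul_apply, Matrix.conjTranspose_apply, sq, star_trivial]
  rw [h3]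
  exact Finset.sum_nonneg fun k _ => sq_nonneg _

/-- The key lower bound. -/
lemma lower_bound {d m : ℕ} (W : Matrix (Fin d) (Fin m) ℝ) {r s : ℝ} (hr : 0 < r)
    (hs : s = r / (r + 1)) (Ω : Matrix (Fin m) (Fin m) ℝ) (hPD : Ω.PosDef)
    (htr : (mpow Ω r).trace ≤ 1) :
    (∑ j, (isHermitian_transpose_mul W).eigenvalues j ^ s) ^ (1/s)
      ≤ (Ω⁻¹ * (Wᵀ * W)).trace := by
  have hr1 : (0:ℝ) < r + 1 := by linarith
  have hs0 : 0 < s := by rw [hs]; positivity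
  have hs1 : s < 1 := by rw [hs, div_lt_one hr1]; linarith
  set A := Wᵀ * W with hAdef
  have hA : A.IsHermitian := isHermitian_transpose_mul W
  have hl : ∀ j, 0 ≤ hA.eigenvalues j := by
    intro j
    have hpsd : A.PosSemidef := by
      have := posSemidef_conjTranspose_mul_self W
      rwa [conjTranspose_eq_transpose_of_trivial] at this
    exact hpsd.eigenvalues_nonneg j
  have hH : Ω.IsHermitian := hPD.1
  set U : Matrix (Fin m) (Fin m) ℝ := (hH.eigenvectorUnitary : Matrix (Fin m) (Fin m) ℝ)
    with hUdef
  have hUmem : U ∈ unitary (Matrix (Fin m) (Fin m) ℝ) := SetLike.coe_mem _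
  set dvec := hH.eigenvalues with hdvec
  have hd : ∀ i, 0 < dvec i := fun i => hPD.eigenvalues_pos i
  have htr' : ∑ i, dvec i ^ r ≤ 1 := by
    have := cfc_trace Ω hH (fun t => t ^ r)
    rw [mpow] at htr
    rw [this] at htr
    exact htr
  have hinv : Ω⁻¹ = U * diagonal (fun i => (dvec i)⁻¹) * star U := by
    conv_lhs => rw [spec_real Ω hH]
    exact conj_diag_inv U hUmem dvec (fun i => (hd i).ne')
  set b := fun i => (star U * A * U) i i with hbdef
  have hb : ∀ i, 0 ≤ b i := fun i => diag_conj_nonneg W U i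
  have htrace : (Ω⁻¹ * A).trace = ∑ i, (dvec i)⁻¹ * b i := by
    rw [hinv]
    calc ((U * diagonal (fun i => (dvec i)⁻¹) * star U) * A).trace
        = ((U * diagonal (fun i => (dvec i)⁻¹)) * (star U * A)).trace := by
          rw [Matrix.mul_assoc]
      _ = ((star U * A) * (U * diagonal (fun i => (dvec i)⁻¹))).trace :=
          Matrix.trace_mul_comm _ _
      _ = ((star U * A * U) * diagonal (fun i => (dvec i)⁻¹)).trace := by
          simp only [Matrix.mul_assoc]
      _ = (diagonal (fun i => (dvec i)⁻¹) * (star U * A * U)).trace :=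
          Matrix.trace_mul_comm _ _
      _ = ∑ i, (dvec i)⁻¹ * b i := trace_diagonal_mul' _ _
  rw [htrace]
  calc (∑ j, hA.eigenvalues j ^ s) ^ (1/s)
      ≤ (∑ i, b i ^ s) ^ (1/s) := by
        apply Real.rpow_le_rpow
          (Finset.sum_nonneg fun j _ => Real.rpow_nonneg (hl j) s)
          (eig_rpow_le_diag_rpow A U hA hl hUmem hs0 hs1.le) (by positivity)
    _ ≤ ∑ i, b i / dvec i := hoelder_step hr hs hb hd htr'
    _ = ∑ i, (dvec i)⁻¹ * b i := by
        refine Finset.sum_congr rfl fun i _ => ?_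
        rw [div_eq_inv_mul]

lemma conj_diag_mul {m : ℕ} (V : Matrix (Fin m) (Fin m) ℝ)
    (hV : star V * V = 1) (v w : Fin m → ℝ) :
    (V * diagonal v * star V) * (V * diagonal w * star V)
      = V * diagonal (fun i => v i * w i) * star V := by
  calc (V * diagonal v * star V) * (V * diagonal w * star V)
      = V * (diagonal v * (star V * V) * diagonal w) * star V := by noncomm_ring
    _ = V * diagonal (fun i => v i * w i) * star V := by
        rw [hV, mul_one, diagonal_mul_diagonal]

lemma upper_member {d m : ℕ} (W : Matrix (Fin d) (Fin m) ℝ) {r s ε : ℝ} (hr : 0 < r)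
    (hs : s = r / (r + 1)) (hε : 0 < ε) (hm : 0 < m) :
    ∃ Ω : Matrix (Fin m) (Fin m) ℝ, Ω.PosDef ∧ (mpow Ω r).trace ≤ 1 ∧
      (Ω⁻¹ * (Wᵀ * W)).trace
        ≤ (∑ j, ((isHermitian_transpose_mul W).eigenvalues j + ε) ^ s) ^ (1/s) := by
  have hr1 : (0:ℝ) < r + 1 := by linarith
  have hs0 : 0 < s := by rw [hs]; positivity
  set A := Wᵀ * W with hAdef
  have hA : A.IsHermitian := isHermitian_transpose_mul W
  set lam := hA.eigenvalues with hlam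
  have hl : ∀ j, 0 ≤ lam j := by
    intro j
    have hpsd : A.PosSemidef := by
      have := posSemidef_conjTranspose_mul_self W
      rwa [conjTranspose_eq_transpose_of_trivial] at this
    exact hpsd.eigenvalues_nonneg j
  have hlε : ∀ j, 0 < lam j + ε := fun j => by linarith [hl j]
  set X := ∑ j, (lam j + ε) ^ s with hXdef
  have hX : 0 < X := by
    apply Finset.sum_pos (fun j _ => Real.rpow_pos_of_pos (hlε j) s)
    have : Nonempty (Fin m) := Fin.pos_iff_nonempty.mp hm
    exact Finset.univ_nonempty
  set c := X ^ (1/r : ℝ) with hcdef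
  have hc : 0 < c := Real.rpow_pos_of_pos hX _
  set g : ℝ → ℝ := fun t => (t + ε) ^ (1/(r+1) : ℝ) / c with hgdef
  have hgpos : ∀ j, 0 < g (lam j) :=
    fun j => div_pos (Real.rpow_pos_of_pos (hlε j) _) hc
  set V : Matrix (Fin m) (Fin m) ℝ := (hA.eigenvectorUnitary : Matrix (Fin m) (Fin m) ℝ)
    with hVdef
  have hVmem : V ∈ unitary (Matrix (Fin m) (Fin m) ℝ) := SetLike.coe_mem _
  have hVs : star V * V = 1 := Unitary.star_mul_self_of_mem hVmem
  have hA' : IsSelfAdjoint A := hA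
  set Ω := cfc g A with hΩdef
  have hΩeq : Ω = V * diagonal (fun j => g (lam j)) * star V := by
    rw [hΩdef, hA.cfc_eq]
    show V * diagonal (RCLike.ofReal ∘ g ∘ lam) * star V = _
    congr 1
  -- PosDef
  have hDpd : (diagonal (fun j => g (lam j))).PosDef := Matrix.PosDef.diagonal hgpos
  have hpsd : Ω.PosSemidef := by
    rw [hΩeq, star_eq_conjTranspose]
    exact hDpd.posSemidef.mul_mul_conjTranspose_same V
  have hunit : IsUnit Ω := by
    have hinv2 : Ω * (V * diagonal (fun j => (g (lam j))⁻¹) * star V) = 1 := by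
      rw [hΩeq, conj_diag_mul V hVs]
      have : (fun i => g (lam i) * (g (lam i))⁻¹) = fun _ => (1:ℝ) := by
        ext i; exact mul_inv_cancel₀ (hgpos i).ne'
      rw [this, diagonal_one, mul_one]
      exact Unitary.mul_star_self_of_mem hVmem
    have := invertibleOfRightInverse _ _ hinv2
    exact isUnit_of_invertible Ω
  have hPD : Ω.PosDef := posDef_of_posSemidef_isUnit hpsd hunit
  -- trace of mpow
  have hsp : (spectrum ℝ A).Finite := A.finite_real_spectrum
  have hcomp : mpow Ω r = cfc ((fun t : ℝ => t ^ r) ∘ g) A := by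
    rw [mpow, hΩdef]
    exact (cfc_comp (fun t : ℝ => t ^ r) g A hA'
      (contOn_finite (hsp.image g) _) (contOn_finite hsp g)).symm
  have htr : (mpow Ω r).trace ≤ 1 := by
    rw [hcomp, cfc_trace A hA]
    have heach : ∀ j, ((fun t : ℝ => t ^ r) ∘ g) (lam j) = (lam j + ε) ^ s / X := by
      intro j
      simp only [Function.comp_apply, hgdef]
      rw [Real.div_rpow (Real.rpow_nonneg (hlε j).le _) hc.le,
        ← Real.rpow_mul (hlε j).le, hcdef, ← Real.rpow_mul hX.le,
        show (1/r : ℝ) * r = 1 by field_simp, Real.rpow_one,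
        show (1/(r+1) : ℝ) * r = s by rw [hs]; field_simp]
    rw [Finset.sum_congr rfl fun j _ => heach j, ← Finset.sum_div, ← hXdef,
      div_self hX.ne']
  refine ⟨Ω, hPD, htr, ?_⟩
  -- value
  have hinv : Ω⁻¹ = V * diagonal (fun j => (g (lam j))⁻¹) * star V := by
    rw [hΩeq]
    exact conj_diag_inv V hVmem _ (fun j => (hgpos j).ne')
  have hval : (Ω⁻¹ * A).trace = ∑ j, (g (lam j))⁻¹ * lam j := by
    conv_lhs => rw [hinv, spec_real A hA, ← hVdef, ← hlam]
    rw [conj_diag_mul V hVs, trace_conj_diag V hVs]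
  rw [← hAdef, hval]
  have hbound : ∀ j, (g (lam j))⁻¹ * lam j ≤ c * (lam j + ε) ^ s := by
    intro j
    have h1 : (g (lam j))⁻¹ = c / (lam j + ε) ^ (1/(r+1) : ℝ) := by
      rw [hgdef]; simp [inv_div]
    rw [h1, mul_comm]
    have h2 : lam j * (c / (lam j + ε) ^ (1/(r+1) : ℝ))
        ≤ (lam j + ε) * (c / (lam j + ε) ^ (1/(r+1) : ℝ)) := by
      apply mul_le_mul_of_nonneg_right (by linarith)
        (div_nonneg hc.le (Real.rpow_nonneg (hlε j).le _))
    refine h2.trans_eq ?_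
    rw [mul_comm, div_mul_eq_mul_div, mul_div_assoc]
    congr 1
    rw [show s = 1 - 1/(r+1) by rw [hs]; field_simp; ring,
      Real.rpow_sub (hlε j), Real.rpow_one]
  calc ∑ j, (g (lam j))⁻¹ * lam j
      ≤ ∑ j, c * (lam j + ε) ^ s := Finset.sum_le_sum fun j _ => hbound j
    _ = c * X := by rw [← Finset.mul_sum]
    _ = X ^ ((1/r : ℝ) + 1) := by rw [hcdef, Real.rpow_add hX, Real.rpow_one]
    _ = X ^ (1/s : ℝ) := by
        congr 1
        rw [hs]
        field_simp
        ring


/-- the infimum over symmetric positive definite Ω with tr(Ω^r) ≤ 1 of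
tr(Ω⁻¹ WᵀW) equals the squared Schatten r̂-norm of W, where r̂ = 2r/(r+1). -/
theorem stmt1 {d m : ℕ} (W : Matrix (Fin d) (Fin m) ℝ) (r : ℝ) (hr : 0 < r)
    (rhat : ℝ) (hrhat : rhat = 2 * r / (r + 1)) :
    sInf {v : ℝ | ∃ Ω : Matrix (Fin m) (Fin m) ℝ, Ω.PosDef ∧ (mpow Ω r).trace ≤ 1 ∧
        v = (Ω⁻¹ * (Wᵀ * W)).trace}
      = (∑ i, singVal W i ^ rhat) ^ (2 / rhat) := by
  have hr1 : (0:ℝ) < r + 1 := by linarith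
  set s : ℝ := r / (r + 1) with hsdef
  have hs0 : 0 < s := by positivity
  have hA : (Wᵀ * W).IsHermitian := isHermitian_transpose_mul W
  set lam := hA.eigenvalues with hlam
  have hl : ∀ j, 0 ≤ lam j := by
    intro j
    have hpsd : (Wᵀ * W).PosSemidef := by
      have := posSemidef_conjTranspose_mul_self W
      rwa [conjTranspose_eq_transpose_of_trivial] at this
    exact hpsd.eigenvalues_nonneg j
  have hRHS : (∑ i, singVal W i ^ rhat) ^ (2 / rhat)
      = (∑ j, lam j ^ s) ^ ((1:ℝ)/s) := by
    have h1 : ∀ i, singVal W i ^ rhat = lam i ^ s := by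
      intro i
      rw [singVal, Real.sqrt_eq_rpow, ← Real.rpow_mul (hl i)]
      congr 1
      rw [hrhat, hsdef]
      field_simp
    have h2 : (2:ℝ)/rhat = 1/s := by
      rw [hrhat, hsdef, div_div_eq_mul_div, div_div_eq_mul_div]
      rw [div_eq_div_iff (by positivity) hr.ne']
      ring
    rw [Finset.sum_congr rfl fun i _ => h1 i, h2]
  rw [hRHS]
  rcases Nat.eq_zero_or_pos m with hm0 | hm
  · subst hm0
    have hset : {v : ℝ | ∃ Ω : Matrix (Fin 0) (Fin 0) ℝ, Ω.PosDef ∧ (mpow Ω r).trace ≤ 1 ∧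
        v = (Ω⁻¹ * (Wᵀ * W)).trace} = {0} := by
      ext v
      constructor
      · rintro ⟨Ω, -, -, rfl⟩
        simp [Matrix.trace]
      · rintro rfl
        exact ⟨1, Matrix.PosDef.one, by simp [Matrix.trace], by simp [Matrix.trace]⟩
    rw [hset, csInf_singleton]
    rw [Finset.univ_eq_empty, Finset.sum_empty, Real.zero_rpow (by positivity : (1:ℝ)/s ≠ 0)]
  · set T : ℝ := (∑ j, lam j ^ s) ^ ((1:ℝ)/s) with hTdef
    set S : Set ℝ := {v : ℝ | ∃ Ω : Matrix (Fin m) (Fin m) ℝ, Ω.PosDef ∧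
        (mpow Ω r).trace ≤ 1 ∧ v = (Ω⁻¹ * (Wᵀ * W)).trace} with hSdef
    have hlow : ∀ v ∈ S, T ≤ v := by
      rintro v ⟨Ω, hPD, htr, rfl⟩
      exact lower_bound W hr hsdef Ω hPD htr
    have hbdd : BddBelow S := ⟨T, hlow⟩
    have hmem : ∀ ε : ℝ, 0 < ε → ∃ v ∈ S, v ≤ (∑ j, (lam j + ε) ^ s) ^ ((1:ℝ)/s) := by
      intro ε hε
      obtain ⟨Ω, hPD, htr, hle⟩ := upper_member W hr hsdef hε hm
      exact ⟨(Ω⁻¹ * (Wᵀ * W)).trace, ⟨Ω, hPD, htr, rfl⟩, hle⟩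
    have hne : S.Nonempty := by
      obtain ⟨v, hv, -⟩ := hmem 1 one_pos
      exact ⟨v, hv⟩
    set f : ℝ → ℝ := fun t => (∑ j, (lam j + t) ^ s) ^ ((1:ℝ)/s) with hfdef
    apply le_antisymm
    · have hfc : Continuous f := by
        apply (Real.continuous_rpow_const (by positivity : (0:ℝ) ≤ 1/s)).comp
        exact continuous_finset_sum _ fun j _ =>
          (Real.continuous_rpow_const hs0.le).comp (continuous_const.add continuous_id)
      have hf0 : f 0 = T := by simp [hfdef, hTdef]
      have hten : Filter.Tendsto f (nhdsWithin 0 (Set.Ioi 0)) (nhds T) := by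
        rw [← hf0]
        exact (hfc.continuousAt).tendsto.mono_left nhdsWithin_le_nhds
      refine ge_of_tendsto hten ?_
      filter_upwards [self_mem_nhdsWithin] with ε hε
      obtain ⟨v, hvS, hvle⟩ := hmem ε hε
      exact (csInf_le hbdd hvS).trans hvle
    · exact le_csInf hne hlow
end

section
/- Let W be a real d×m matrix with WᵀW positive definite, let r, λ₁, λ₂ be positive real numbers, and set Ω* = (λ₁/(2λ₂r))^{1/(r+1)} · (WᵀW)^{1/(r+1)} and λᵣ = (1 + 1/r)·(λ₁^r λ₂ r / 2^r)^{1/(r+1)}. Then (λ₁/2)·tr(W (Ω*)⁻¹ Wᵀ) + λ₂·tr((Ω*)^r) = λᵣ · tr((WᵀW)^{r/(r+1)}), so Ω* attains the infimum of (λ₁/2)·tr(W Ω⁻¹ Wᵀ) + λ₂·tr(Ω^r) over symmetric positive definite Ω. -/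
open Matrix

namespace Stmt2Aux

variable {m : ℕ}

lemma conj_mul_conj {V : Matrix (Fin m) (Fin m) ℝ} (h : star V * V = 1)
    (M N : Matrix (Fin m) (Fin m) ℝ) :
    (V * M * star V) * (V * N * star V) = V * (M * N) * star V := by
  calc (V * M * star V) * (V * N * star V)
      = V * (M * ((star V * V) * (N * star V))) := by simp only [Matrix.mul_assoc]
    _ = V * (M * N) * star V := by rw [h, one_mul]; simp only [Matrix.mul_assoc]

lemma trace_conj {V : Matrix (Fin m) (Fin m) ℝ} (h : star V * V = 1)
    (M : Matrix (Fin m) (Fin m) ℝ) :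
    (V * M * star V).trace = M.trace := by
  rw [trace_mul_cycle, h, one_mul]

lemma inv_conj {V : Matrix (Fin m) (Fin m) ℝ} (h1 : star V * V = 1) (h2 : V * star V = 1)
    {a : Fin m → ℝ} (ha : ∀ i, a i ≠ 0) :
    (V * diagonal a * star V)⁻¹ = V * diagonal (fun i => (a i)⁻¹) * star V := by
  apply inv_eq_right_inv
  rw [conj_mul_conj h1, diagonal_mul_diagonal]
  have h3 : (fun i => a i * (a i)⁻¹) = fun _ => (1:ℝ) :=
    funext fun i => mul_inv_cancel₀ (ha i)
  rw [show (diagonal fun i => a i * (a i)⁻¹) = (1 : Matrix (Fin m) (Fin m) ℝ) by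
      rw [h3, diagonal_one],
    mul_one, h2]

lemma posdef_conj {V : Matrix (Fin m) (Fin m) ℝ} (h1 : star V * V = 1)
    (h2 : V * star V = 1) {a : Fin m → ℝ} (ha : ∀ i, 0 < a i) :
    (V * diagonal a * star V).PosDef := by
  have hd : (diagonal a).PosDef := posDef_diagonal_iff.mpr ha
  refine posDef_iff_dotProduct_mulVec.mpr ⟨?_, ?_⟩
  · show (V * diagonal a * star V)ᴴ = _
    rw [conjTranspose_mul, conjTranspose_mul, star_eq_conjTranspose,
      conjTranspose_conjTranspose, diagonal_conjTranspose]
    simp only [star_trivial, Matrix.mul_assoc, star_eq_conjTranspose]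
  · intro x hx
    have hy : star V *ᵥ x ≠ 0 := by
      intro h0
      apply hx
      have h4 := congrArg (fun v => V *ᵥ v) h0
      simpa [Matrix.mulVec_mulVec, h2] using h4
    have h5 := hd.dotProduct_mulVec_pos hy
    have key : star x ⬝ᵥ ((V * diagonal a * star V) *ᵥ x)
        = star (star V *ᵥ x) ⬝ᵥ (diagonal a *ᵥ (star V *ᵥ x)) := by
      simp only [star_trivial, ← Matrix.mulVec_mulVec]
      rw [Matrix.dotProduct_mulVec, star_eq_conjTranspose,
        conjTranspose_eq_transpose_of_trivial, ← Matrix.mulVec_transpose]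
    rw [key]
    exact h5

lemma eq_of_log_eq {x y : ℝ} (hx : 0 < x) (hy : 0 < y) (h : Real.log x = Real.log y) :
    x = y := by
  rw [← Real.exp_log hx, ← Real.exp_log hy, h]

variable {r lam1 lam2 : ℝ}

/-- Identity J: `lam2 * (r+1) * c^r = lamr`. -/
lemma constJ (hr : 0 < r) (h1 : 0 < lam1) (h2 : 0 < lam2) :
    lam2 * (r+1) * ((lam1/(2*lam2*r)) ^ (1/(r+1))) ^ r
      = (1 + 1/r) * (lam1 ^ r * lam2 * r / (2:ℝ) ^ r) ^ (1/(r+1)) := by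
  have hr1 : (0:ℝ) < r + 1 := by linarith
  have hX : 0 < lam1/(2*lam2*r) := by positivity
  have hcpos : 0 < (lam1/(2*lam2*r)) ^ (1/(r+1)) := Real.rpow_pos_of_pos hX _
  have hY : 0 < lam1 ^ r * lam2 * r / (2:ℝ) ^ r := by positivity
  rw [show (1:ℝ) + 1/r = (r+1)/r by field_simp]
  apply eq_of_log_eq (by positivity) (by positivity)
  rw [Real.log_mul (by positivity) (by positivity),
    Real.log_mul (ne_of_gt h2) (ne_of_gt hr1),
    Real.log_rpow hcpos, Real.log_rpow hX,
    Real.log_div (by positivity) (by positivity),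
    Real.log_mul (by positivity) (ne_of_gt hr),
    Real.log_mul (by positivity) (ne_of_gt h2),
    Real.log_mul (by positivity) (ne_of_gt (Real.rpow_pos_of_pos hY _)),
    Real.log_div (ne_of_gt hr1) (ne_of_gt hr),
    Real.log_rpow hY, Real.log_div (by positivity) (by positivity),
    Real.log_mul (by positivity) (ne_of_gt hr),
    Real.log_mul (by positivity) (ne_of_gt h2),
    Real.log_rpow h1, Real.log_rpow (by norm_num)]
  field_simp
  ring

lemma constCI (hr : 0 < r) (h1 : 0 < lam1) (h2 : 0 < lam2) :
    lam1/2 * ((lam1/(2*lam2*r)) ^ (1/(r+1)))⁻¹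
      + lam2 * ((lam1/(2*lam2*r)) ^ (1/(r+1))) ^ r
      = (1 + 1/r) * (lam1 ^ r * lam2 * r / (2:ℝ) ^ r) ^ (1/(r+1)) := by
  have hr1 : (0:ℝ) < r + 1 := by linarith
  have hX : 0 < lam1/(2*lam2*r) := by positivity
  set c := (lam1/(2*lam2*r)) ^ (1/(r+1)) with hc_def
  have hc : 0 < c := Real.rpow_pos_of_pos hX _
  have hcr1 : c ^ (r+1) = lam1/(2*lam2*r) := by
    rw [hc_def, ← Real.rpow_mul hX.le, one_div, inv_mul_cancel₀ (ne_of_gt hr1), Real.rpow_one]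
  have h5 : c ^ (r+1) = c ^ r * c := by
    rw [Real.rpow_add hc, Real.rpow_one]
  have key : lam1/2 = lam2*r*c^r*c := by
    rw [mul_assoc, ← h5, hcr1]; field_simp
  have h6 : lam1/2 * c⁻¹ = lam2*r*c^r := by
    rw [key, mul_assoc, mul_inv_cancel₀ (ne_of_gt hc), mul_one]
  calc lam1/2 * c⁻¹ + lam2 * c^r = lam2*(r+1)*c^r := by rw [h6]; ring
    _ = _ := constJ hr h1 h2

lemma scalar_eq (hr : 0 < r) (h1 : 0 < lam1) (h2 : 0 < lam2) {μ : ℝ} (hμ : 0 < μ) :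
    lam1/2 * (μ * ((lam1/(2*lam2*r)) ^ (1/(r+1)) * μ ^ (1/(r+1)))⁻¹)
      + lam2 * ((lam1/(2*lam2*r)) ^ (1/(r+1)) * μ ^ (1/(r+1))) ^ r
      = (1 + 1/r) * (lam1 ^ r * lam2 * r / (2:ℝ) ^ r) ^ (1/(r+1)) * μ ^ (r/(r+1)) := by
  have hr1 : (0:ℝ) < r + 1 := by linarith
  have hX : 0 < lam1/(2*lam2*r) := by positivity
  set c := (lam1/(2*lam2*r)) ^ (1/(r+1)) with hc_def
  have hc : 0 < c := Real.rpow_pos_of_pos hX _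
  have hμp : 0 < μ ^ (1/(r+1)) := Real.rpow_pos_of_pos hμ _
  have hsplit : μ ^ (r/(r+1)) * μ ^ (1/(r+1)) = μ := by
    rw [← Real.rpow_add hμ, show r/(r+1)+1/(r+1) = 1 by field_simp, Real.rpow_one]
  have t0 : μ * (μ ^ (1/(r+1)))⁻¹ = μ ^ (r/(r+1)) := by
    rw [← div_eq_mul_inv, div_eq_iff (ne_of_gt hμp)]; exact hsplit.symm
  have t1 : μ * (c * μ ^ (1/(r+1)))⁻¹ = c⁻¹ * μ ^ (r/(r+1)) := by
    calc μ * (c * μ ^ (1/(r+1)))⁻¹ = (μ * (μ ^ (1/(r+1)))⁻¹) * c⁻¹ := by rw [mul_inv]; ring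
      _ = μ ^ (r/(r+1)) * c⁻¹ := by rw [t0]
      _ = c⁻¹ * μ ^ (r/(r+1)) := mul_comm _ _
  have t2 : (c * μ ^ (1/(r+1))) ^ r = c ^ r * μ ^ (r/(r+1)) := by
    rw [Real.mul_rpow hc.le hμp.le, ← Real.rpow_mul hμ.le,
      show 1/(r+1)*r = r/(r+1) by ring]
  rw [t1, t2]
  have hCI := constCI (r := r) (lam1 := lam1) (lam2 := lam2) hr h1 h2
  rw [← hc_def] at hCI
  linear_combination μ ^ (r/(r+1)) * hCI

lemma key_prod (hr : 0 < r) (h1 : 0 < lam1) (h2 : 0 < lam2) {a ω : ℝ} (ha : 0 < a)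
    (hω : 0 < ω) :
    (1 + 1/r) * (lam1 ^ r * lam2 * r / (2:ℝ) ^ r) ^ (1/(r+1)) * a ^ (r/(r+1))
      = ((lam1/2 * (a * ω⁻¹)) * ((r+1)/r)) ^ (r/(r+1))
        * ((lam2 * ω ^ r) * (r+1)) ^ (1/(r+1)) := by
  have hr1 : (0:ℝ) < r + 1 := by linarith
  have hY : 0 < lam1 ^ r * lam2 * r / (2:ℝ) ^ r := by positivity
  have hωr : 0 < ω ^ r := Real.rpow_pos_of_pos hω _
  rw [show (1:ℝ) + 1/r = (r+1)/r by field_simp]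
  apply eq_of_log_eq (by positivity) (by positivity)
  rw [Real.log_mul (by positivity) (ne_of_gt (Real.rpow_pos_of_pos ha _)),
    Real.log_mul (by positivity) (ne_of_gt (Real.rpow_pos_of_pos hY _)),
    Real.log_div (ne_of_gt hr1) (ne_of_gt hr),
    Real.log_rpow hY, Real.log_rpow ha,
    Real.log_div (by positivity) (by positivity),
    Real.log_mul (by positivity) (ne_of_gt hr),
    Real.log_mul (by positivity) (ne_of_gt h2),
    Real.log_rpow h1, Real.log_rpow (by norm_num : (0:ℝ) < 2),
    Real.log_mul (by positivity) (by positivity),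
    Real.log_rpow (by positivity), Real.log_rpow (by positivity),
    Real.log_mul (by positivity) (ne_of_gt hr1),
    Real.log_mul (ne_of_gt h2) (ne_of_gt hωr),
    Real.log_rpow hω,
    Real.log_mul (by positivity) (by positivity),
    Real.log_mul (by positivity) (by positivity),
    Real.log_mul (ne_of_gt ha) (by positivity),
    Real.log_inv,
    Real.log_div (ne_of_gt hr1) (ne_of_gt hr),
    Real.log_div (ne_of_gt h1) (by norm_num : (2:ℝ) ≠ 0)]
  field_simp
  ring

lemma scalar_ineq (hr : 0 < r) (h1 : 0 < lam1) (h2 : 0 < lam2) {a ω : ℝ} (ha : 0 ≤ a)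
    (hω : 0 < ω) :
    (1 + 1/r) * (lam1 ^ r * lam2 * r / (2:ℝ) ^ r) ^ (1/(r+1)) * a ^ (r/(r+1))
      ≤ lam1/2 * (a * ω⁻¹) + lam2 * ω ^ r := by
  have hr1 : (0:ℝ) < r + 1 := by linarith
  rcases ha.eq_or_lt with h | h
  · rw [← h, Real.zero_rpow (by positivity : r/(r+1) ≠ 0), mul_zero]
    positivity
  · rw [key_prod hr h1 h2 h hω]
    have hgm := Real.geom_mean_le_arith_mean2_weighted
      (w₁ := r/(r+1)) (w₂ := 1/(r+1))
      (p₁ := (lam1/2 * (a * ω⁻¹)) * ((r+1)/r)) (p₂ := (lam2 * ω ^ r) * (r+1))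
      (by positivity) (by positivity) (by positivity) (by positivity) (by field_simp)
    calc _ ≤ r/(r+1) * ((lam1/2 * (a * ω⁻¹)) * ((r+1)/r))
            + 1/(r+1) * ((lam2 * ω ^ r) * (r+1)) := hgm
      _ = lam1/2 * (a * ω⁻¹) + lam2 * ω ^ r := by field_simp

end Stmt2Aux

open Stmt2Aux

/-- Ω* = (λ₁/(2λ₂r))^{1/(r+1)} · (WᵀW)^{1/(r+1)} attains the infimum of
(λ₁/2)·tr(W Ω⁻¹ Wᵀ) + λ₂·tr(Ω^r) over symmetric positive definite Ω, with optimal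
value λᵣ · tr((WᵀW)^{r/(r+1)}). -/
theorem stmt2 {d m : ℕ} (W : Matrix (Fin d) (Fin m) ℝ) (hW : (Wᵀ * W).PosDef)
    (r lam1 lam2 : ℝ) (hr : 0 < r) (h1 : 0 < lam1) (h2 : 0 < lam2)
    (Ωstar : Matrix (Fin m) (Fin m) ℝ)
    (hΩstar : Ωstar = ((lam1 / (2 * lam2 * r)) ^ (1 / (r + 1))) • mpow (Wᵀ * W) (1 / (r + 1)))
    (lamr : ℝ)
    (hlamr : lamr = (1 + 1 / r) * (lam1 ^ r * lam2 * r / (2 : ℝ) ^ r) ^ (1 / (r + 1))) :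
    (lam1 / 2) * (W * Ωstar⁻¹ * Wᵀ).trace + lam2 * (mpow Ωstar r).trace
      = lamr * (mpow (Wᵀ * W) (r / (r + 1))).trace ∧
    Ωstar.PosDef ∧
    ∀ Ω : Matrix (Fin m) (Fin m) ℝ, Ω.PosDef →
      (lam1 / 2) * (W * Ωstar⁻¹ * Wᵀ).trace + lam2 * (mpow Ωstar r).trace ≤
        (lam1 / 2) * (W * Ω⁻¹ * Wᵀ).trace + lam2 * (mpow Ω r).trace := by
  have hr1 : (0:ℝ) < r + 1 := by linarith
  have hA : (Wᵀ * W).IsHermitian := hW.1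
  set A := Wᵀ * W with hAdef
  set U : Matrix (Fin m) (Fin m) ℝ := (hA.eigenvectorUnitary : Matrix (Fin m) (Fin m) ℝ) with hUdef
  set μ : Fin m → ℝ := hA.eigenvalues with hμdef
  have hU1 : star U * U = 1 := mem_unitaryGroup_iff'.mp hA.eigenvectorUnitary.2
  have hU2 : U * star U = 1 := mem_unitaryGroup_iff.mp hA.eigenvectorUnitary.2
  have hμ : ∀ i, 0 < μ i := fun i => hW.eigenvalues_pos i
  have hcfcA : ∀ f : ℝ → ℝ, cfc f A = U * diagonal (fun i => f (μ i)) * star U := by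
    intro f; rw [hA.cfc_eq]; rfl
  have hAspec : A = U * diagonal μ * star U := by simpa using hA.spectral_theorem
  set c : ℝ := (lam1 / (2 * lam2 * r)) ^ (1 / (r + 1)) with hcdef
  have hX : 0 < lam1/(2*lam2*r) := by positivity
  have hc : 0 < c := Real.rpow_pos_of_pos hX _
  set v : Fin m → ℝ := fun i => c * μ i ^ (1/(r+1)) with hvdef
  have hv : ∀ i, 0 < v i := fun i => by
    have := Real.rpow_pos_of_pos (hμ i) (1/(r+1)); positivity
  -- Ωstar as conjugated diagonal
  have hΩs : Ωstar = U * diagonal v * star U := by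
    rw [hΩstar, mpow, hcfcA]
    rw [show diagonal v = c • diagonal (fun i => μ i ^ (1/(r+1))) by
      rw [← diagonal_smul]; rfl]
    rw [Matrix.mul_smul, Matrix.smul_mul]
  -- inverse of Ωstar
  have hΩsinv : Ωstar⁻¹ = U * diagonal (fun i => (v i)⁻¹) * star U := by
    rw [hΩs]; exact inv_conj hU1 hU2 (fun i => ne_of_gt (hv i))
  -- general first-trace formula
  have htr1 : ∀ X : Matrix (Fin m) (Fin m) ℝ, (W * X * Wᵀ).trace = (A * X).trace := by
    intro X
    rw [trace_mul_cycle, hAdef, Matrix.mul_assoc]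
  -- trace of W Ωstar⁻¹ Wᵀ
  have htrace1 : (W * Ωstar⁻¹ * Wᵀ).trace = ∑ i, μ i * (v i)⁻¹ := by
    rw [htr1, hΩsinv]
    nth_rewrite 1 [hAspec]
    rw [conj_mul_conj hU1, diagonal_mul_diagonal, trace_conj hU1, trace_diagonal]
  -- mpow Ωstar r
  have hmp : mpow Ωstar r = U * diagonal (fun i => (v i) ^ r) * star U := by
    have hF : Ωstar = cfc (fun t : ℝ => c * t ^ (1/(r+1))) A := by
      rw [hcfcA]; exact hΩs
    have hcomp : cfc ((fun t : ℝ => t ^ r) ∘ (fun t : ℝ => c * t ^ (1/(r+1)))) A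
        = cfc (fun t : ℝ => t ^ r) (cfc (fun t : ℝ => c * t ^ (1/(r+1))) A) :=
      cfc_comp _ _ A hA
        ((Real.continuous_rpow_const hr.le).continuousOn)
        ((continuous_const.mul (Real.continuous_rpow_const (by positivity))).continuousOn)
    rw [mpow, hF, ← hcomp, hcfcA]
    rfl
  have htrace2 : (mpow Ωstar r).trace = ∑ i, (v i) ^ r := by
    rw [hmp, trace_conj hU1, trace_diagonal]
  have htrace3 : (mpow A (r/(r+1))).trace = ∑ i, (μ i) ^ (r/(r+1)) := by
    rw [mpow, hcfcA, trace_conj hU1, trace_diagonal]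
  -- Part 1: the value equality
  have part1 : (lam1 / 2) * (W * Ωstar⁻¹ * Wᵀ).trace + lam2 * (mpow Ωstar r).trace
      = lamr * (mpow A (r / (r + 1))).trace := by
    rw [htrace1, htrace2, htrace3, Finset.mul_sum, Finset.mul_sum, Finset.mul_sum,
      ← Finset.sum_add_distrib]
    refine Finset.sum_congr rfl fun i _ => ?_
    rw [hlamr]
    exact scalar_eq hr h1 h2 (hμ i)
  refine ⟨part1, ?_, ?_⟩
  · rw [hΩs]; exact posdef_conj hU1 hU2 hv
  -- Part 3: optimality
  intro Ω hΩ
  rw [part1]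
  have hΩH : Ω.IsHermitian := hΩ.1
  set V : Matrix (Fin m) (Fin m) ℝ := (hΩH.eigenvectorUnitary : Matrix (Fin m) (Fin m) ℝ) with hVdef
  set ω : Fin m → ℝ := hΩH.eigenvalues with hωdef
  have hV1 : star V * V = 1 := mem_unitaryGroup_iff'.mp hΩH.eigenvectorUnitary.2
  have hV2 : V * star V = 1 := mem_unitaryGroup_iff.mp hΩH.eigenvectorUnitary.2
  have hω : ∀ i, 0 < ω i := fun i => hΩ.eigenvalues_pos i
  have hΩspec : Ω = V * diagonal ω * star V := by simpa using hΩH.spectral_theorem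
  have hcfcΩ : ∀ f : ℝ → ℝ, cfc f Ω = V * diagonal (fun i => f (ω i)) * star V := by
    intro f; rw [hΩH.cfc_eq]; rfl
  have hΩinv : Ω⁻¹ = V * diagonal (fun i => (ω i)⁻¹) * star V := by
    rw [hΩspec]; exact inv_conj hV1 hV2 (fun i => ne_of_gt (hω i))
  set M : Matrix (Fin m) (Fin m) ℝ := star V * A * V with hMdef
  have hAM : A = V * M * star V := by
    rw [hMdef]
    calc A = (V * star V) * A * (V * star V) := by rw [hV2, one_mul, mul_one]
      _ = V * (star V * A * V) * star V := by simp only [Matrix.mul_assoc]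
  set a : Fin m → ℝ := fun i => M i i with hadef
  have htraceΩ1 : (W * Ω⁻¹ * Wᵀ).trace = ∑ i, a i * (ω i)⁻¹ := by
    rw [htr1, hΩinv]
    nth_rewrite 1 [hAM]
    rw [conj_mul_conj hV1, trace_conj hV1, Matrix.trace]
    simp [Matrix.diag, Matrix.mul_diagonal]
    rfl
  have htraceΩ2 : (mpow Ω r).trace = ∑ i, (ω i) ^ r := by
    rw [mpow, hcfcΩ, trace_conj hV1, trace_diagonal]
  -- the doubly stochastic matrix
  set Q : Matrix (Fin m) (Fin m) ℝ := star V * U with hQdef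
  have hQ1 : Q * star Q = 1 := by
    rw [hQdef, Matrix.star_mul, star_star]
    calc star V * U * (star U * V) = star V * (U * star U) * V := by
          simp only [Matrix.mul_assoc]
      _ = 1 := by rw [hU2, mul_one, hV1]
  have hQ2 : star Q * Q = 1 := by
    rw [hQdef, Matrix.star_mul, star_star]
    calc star U * V * (star V * U) = star U * (V * star V) * U := by
          simp only [Matrix.mul_assoc]
      _ = 1 := by rw [hV2, mul_one, hU1]
  have hstarQ : ∀ i j, star Q j i = Q i j := by
    intro i j
    rw [star_eq_conjTranspose, conjTranspose_apply, star_trivial]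
  have hrow : ∀ i, ∑ j, (Q i j)^2 = 1 := by
    intro i
    have := congrFun (congrFun hQ1 i) i
    rw [Matrix.mul_apply] at this
    simp only [Matrix.one_apply_eq] at this
    rw [← this]
    refine Finset.sum_congr rfl fun j _ => ?_
    rw [hstarQ i j]; ring
  have hcol : ∀ j, ∑ i, (Q i j)^2 = 1 := by
    intro j
    have := congrFun (congrFun hQ2 j) j
    rw [Matrix.mul_apply] at this
    simp only [Matrix.one_apply_eq] at this
    rw [← this]
    refine Finset.sum_congr rfl fun i _ => ?_
    rw [hstarQ i j]; ring
  have haS : ∀ i, a i = ∑ j, (Q i j)^2 * μ j := by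
    intro i
    have hM2 : M = Q * diagonal μ * star Q := by
      rw [hMdef, hQdef, Matrix.star_mul, star_star]
      nth_rewrite 1 [hAspec]
      simp only [Matrix.mul_assoc]
    have ha2 : a i = (Q * diagonal μ * star Q) i i := by rw [← hM2]
    rw [ha2, Matrix.mul_apply]
    refine Finset.sum_congr rfl fun j _ => ?_
    rw [Matrix.mul_diagonal, hstarQ i j]; ring
  have ha_nonneg : ∀ i, 0 ≤ a i := by
    intro i
    rw [haS i]
    exact Finset.sum_nonneg fun j _ => mul_nonneg (sq_nonneg _) (hμ j).le
  -- Jensen step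
  have hq0 : (0:ℝ) < r/(r+1) := by positivity
  have hq1 : r/(r+1) ≤ 1 := by
    rw [div_le_one hr1]; linarith
  have hjensen : ∀ i, ∑ j, (Q i j)^2 * (μ j) ^ (r/(r+1)) ≤ (a i) ^ (r/(r+1)) := by
    intro i
    have hconc := Real.concaveOn_rpow hq0.le hq1
    have := hconc.le_map_sum (t := Finset.univ) (w := fun j => (Q i j)^2) (p := μ)
      (fun j _ => sq_nonneg _) (hrow i) (fun j _ => (hμ j).le)
    simpa [smul_eq_mul, haS i] using this
  have hsum_jensen : lamr * ∑ j, (μ j) ^ (r/(r+1)) ≤ lamr * ∑ i, (a i) ^ (r/(r+1)) := by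
    have hlamr_pos : 0 < lamr := by
      rw [hlamr]; positivity
    apply mul_le_mul_of_nonneg_left _ hlamr_pos.le
    calc ∑ j, (μ j) ^ (r/(r+1)) = ∑ j, (∑ i, (Q i j)^2) * (μ j) ^ (r/(r+1)) := by
          refine Finset.sum_congr rfl fun j _ => ?_
          rw [hcol j, one_mul]
      _ = ∑ i, ∑ j, (Q i j)^2 * (μ j) ^ (r/(r+1)) := by
          rw [Finset.sum_comm]
          refine Finset.sum_congr rfl fun j _ => ?_
          rw [Finset.sum_mul]
      _ ≤ ∑ i, (a i) ^ (r/(r+1)) := Finset.sum_le_sum fun i _ => hjensen i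
  calc lamr * (mpow A (r/(r+1))).trace = lamr * ∑ j, (μ j) ^ (r/(r+1)) := by rw [htrace3]
    _ ≤ lamr * ∑ i, (a i) ^ (r/(r+1)) := hsum_jensen
    _ = ∑ i, lamr * (a i) ^ (r/(r+1)) := Finset.mul_sum _ _ _
    _ ≤ ∑ i, (lam1/2 * (a i * (ω i)⁻¹) + lam2 * (ω i) ^ r) := by
        refine Finset.sum_le_sum fun i _ => ?_
        rw [hlamr]
        exact scalar_ineq hr h1 h2 (ha_nonneg i) (hω i)
    _ = (lam1 / 2) * (W * Ω⁻¹ * Wᵀ).trace + lam2 * (mpow Ω r).trace := by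
        rw [htraceΩ1, htraceΩ2, Finset.sum_add_distrib, Finset.mul_sum, Finset.mul_sum]
end

section
/- Let W be a real d×m matrix and λ₁, λ₂ > 0. Then the infimum, over all m×m real symmetric positive definite matrices Ω, of (λ₁/2)·tr(W Ω⁻¹ Wᵀ) + λ₂·tr(Ω) equals √(2λ₁λ₂) · Σᵢ σᵢ(W), i.e., √(2λ₁λ₂) times the trace norm (sum of singular values) of W. -/
open Matrix

/-! ### Auxiliary lemmas -/

/-- Cauchy–Schwarz for the trace (Frobenius) inner product. -/
lemma traceCS {m : ℕ} (X Y : Matrix (Fin m) (Fin m) ℝ) :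
    ((Xᵀ * Y).trace) ^ 2 ≤ (Xᵀ * X).trace * (Yᵀ * Y).trace := by
  have h : ∀ (P Q : Matrix (Fin m) (Fin m) ℝ),
      (Pᵀ * Q).trace = ∑ p : Fin m × Fin m, P p.1 p.2 * Q p.1 p.2 := by
    intro P Q
    simp only [Matrix.trace, Matrix.diag, Matrix.mul_apply, Matrix.transpose_apply,
      Fintype.sum_prod_type]
    exact Finset.sum_comm
  rw [h, h, h]
  have := Finset.sum_mul_sq_le_sq_mul_sq Finset.univ
    (fun p : Fin m × Fin m => X p.1 p.2) (fun p => Y p.1 p.2)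
  simpa [sq] using this

lemma trace_conj {m : ℕ} (V D : Matrix (Fin m) (Fin m) ℝ) (hV : star V * V = 1) :
    (V * D * star V).trace = D.trace := by
  rw [Matrix.trace_mul_cycle, hV, Matrix.one_mul]

lemma posDef_conj {m : ℕ} {D : Matrix (Fin m) (Fin m) ℝ} (hD : D.PosDef)
    (V : Matrix (Fin m) (Fin m) ℝ) (hV : V * star V = 1) :
    (V * D * star V).PosDef := by
  refine Matrix.PosDef.of_dotProduct_mulVec_pos ?_ ?_
  · exact isHermitian_mul_mul_conjTranspose V hD.1
  · intro x hx
    have hy : star V *ᵥ x ≠ 0 := by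
      intro h
      apply hx
      have : V *ᵥ (star V *ᵥ x) = 0 := by rw [h, Matrix.mulVec_zero]
      rwa [Matrix.mulVec_mulVec, hV, Matrix.one_mulVec] at this
    have := hD.dotProduct_mulVec_pos hy
    simpa only [star_mulVec, dotProduct_mulVec, vecMul_vecMul, conjTranspose_conjTranspose,
      ← Matrix.mul_assoc, star_eq_conjTranspose] using this

lemma unitary_conj_mul {m : ℕ} (V D₁ D₂ : Matrix (Fin m) (Fin m) ℝ) (hV : star V * V = 1) :
    (V * D₁ * star V) * (V * D₂ * star V) = V * (D₁ * D₂) * star V := by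
  calc (V * D₁ * star V) * (V * D₂ * star V)
      = V * (D₁ * ((star V * V) * D₂)) * star V := by
        simp only [Matrix.mul_assoc]
    _ = V * (D₁ * D₂) * star V := by rw [hV, Matrix.one_mul]

lemma psd_trace_nonneg {m : ℕ} {M : Matrix (Fin m) (Fin m) ℝ} (hM : M.PosSemidef) :
    0 ≤ M.trace := by
  rw [Matrix.trace]
  refine Finset.sum_nonneg fun i _ => ?_
  simpa using hM.dotProduct_mulVec_nonneg (Pi.single i 1)

open scoped MatrixOrder in
/-- Square root of a positive semidefinite matrix (replacement for the removed Mathlib API). -/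
noncomputable def Matrix.PosSemidef.sqrt {m : ℕ} {A : Matrix (Fin m) (Fin m) ℝ}
    (_hA : A.PosSemidef) : Matrix (Fin m) (Fin m) ℝ :=
  CFC.sqrt A

open scoped MatrixOrder in
lemma Matrix.PosSemidef.posSemidef_sqrt {m : ℕ} {A : Matrix (Fin m) (Fin m) ℝ}
    (hA : A.PosSemidef) : hA.sqrt.PosSemidef :=
  (CFC.sqrt_nonneg A).posSemidef

open scoped MatrixOrder in
lemma Matrix.PosSemidef.sqrt_mul_self {m : ℕ} {A : Matrix (Fin m) (Fin m) ℝ}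
    (hA : A.PosSemidef) : hA.sqrt * hA.sqrt = A :=
  CFC.sqrt_mul_sqrt_self A hA.nonneg

open scoped MatrixOrder in
lemma trace_sqrt_eq {m : ℕ} {A : Matrix (Fin m) (Fin m) ℝ} (hA : A.PosSemidef) :
    hA.sqrt.trace = ∑ i, Real.sqrt (hA.1.eigenvalues i) := by
  unfold Matrix.PosSemidef.sqrt
  rw [CFC.sqrt_eq_cfc, cfc_nnreal_eq_real _ A hA.nonneg, hA.1.cfc_eq, Matrix.IsHermitian.cfc,
    Unitary.conjStarAlgAut_apply]
  rw [Matrix.trace_mul_cycle]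
  have hV : star (hA.1.eigenvectorUnitary : Matrix (Fin m) (Fin m) ℝ) *
      (hA.1.eigenvectorUnitary : Matrix (Fin m) (Fin m) ℝ) = 1 :=
    Matrix.mem_unitaryGroup_iff'.mp hA.1.eigenvectorUnitary.2
  rw [hV, Matrix.one_mul, Matrix.trace_diagonal]
  simp [Real.coe_sqrt, fun i => max_eq_left (hA.eigenvalues_nonneg i)]

/-- Lower bound: every value in the feasible set is at least the target. -/
lemma stmt15_lb {d m : ℕ} (W : Matrix (Fin d) (Fin m) ℝ) (lam1 lam2 : ℝ)
    (h1 : 0 < lam1) (h2 : 0 < lam2) (Ω : Matrix (Fin m) (Fin m) ℝ) (hΩ : Ω.PosDef) :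
    Real.sqrt (2 * lam1 * lam2) * ∑ i, singVal W i ≤
      (lam1 / 2) * (W * Ω⁻¹ * Wᵀ).trace + lam2 * Ω.trace := by
  have hA : (Wᵀ * W).PosSemidef := by simpa using W.posSemidef_conjTranspose_mul_self
  set B := hA.sqrt with hBdef
  have hB : B.PosSemidef := hA.posSemidef_sqrt
  have hBB : B * B = Wᵀ * W := hA.sqrt_mul_self
  have hBt : Bᵀ = B := by
    have := hB.1
    simpa [Matrix.IsHermitian, Matrix.conjTranspose_eq_transpose_of_trivial] using this
  set S := hΩ.posSemidef.sqrt with hSdef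
  have hS : S.PosSemidef := hΩ.posSemidef.posSemidef_sqrt
  have hSS : S * S = Ω := hΩ.posSemidef.sqrt_mul_self
  have hSt : Sᵀ = S := by
    have := hS.1
    simpa [Matrix.IsHermitian, Matrix.conjTranspose_eq_transpose_of_trivial] using this
  have hdet : IsUnit S.det := by
    have h2' : S.det * S.det = Ω.det := by rw [← Matrix.det_mul, hSS]
    have : Ω.det ≠ 0 := ne_of_gt hΩ.det_pos
    have : S.det ≠ 0 := fun h => this (by rw [← h2', h, mul_zero])
    exact this.isUnit
  have hSinv : S * S⁻¹ = 1 := Matrix.mul_nonsing_inv S hdet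
  have hSinvt : S⁻¹ᵀ = S⁻¹ := by rw [Matrix.transpose_nonsing_inv, hSt]
  have hΩinv : Ω⁻¹ = S⁻¹ * S⁻¹ := by rw [← hSS, Matrix.mul_inv_rev]
  -- Cauchy-Schwarz with X = B * S⁻¹, Y = S
  have hCS := traceCS (B * S⁻¹) S
  have e1 : ((B * S⁻¹)ᵀ * S).trace = B.trace := by
    rw [Matrix.transpose_mul, hSinvt, hBt, Matrix.trace_mul_cycle, hSinv, Matrix.one_mul]
  have e2 : ((B * S⁻¹)ᵀ * (B * S⁻¹)).trace = (W * Ω⁻¹ * Wᵀ).trace := by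
    rw [Matrix.transpose_mul, hSinvt, hBt]
    have : S⁻¹ * B * (B * S⁻¹) = S⁻¹ * (B * B) * S⁻¹ := by
      simp only [Matrix.mul_assoc]
    rw [this, hBB, Matrix.trace_mul_cycle, ← hΩinv, Matrix.trace_mul_comm]
    conv_rhs => rw [Matrix.trace_mul_cycle]
  have e3 : (Sᵀ * S).trace = Ω.trace := by rw [hSt, hSS]
  rw [e1, e2, e3] at hCS
  set t := (W * Ω⁻¹ * Wᵀ).trace with htdef
  set s := Ω.trace with hsdef
  have ht0 : 0 ≤ t := by
    have hpsd : (W * Ω⁻¹ * Wᵀ).PosSemidef := by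
      have := hΩ.inv.posSemidef.mul_mul_conjTranspose_same W
      simpa using this
    exact psd_trace_nonneg hpsd
  have hs0 : 0 ≤ s := psd_trace_nonneg hΩ.posSemidef
  have hBtr : B.trace = ∑ i, singVal W i := by
    rw [trace_sqrt_eq hA]
    rfl
  have hBtr0 : 0 ≤ B.trace := psd_trace_nonneg hB
  have hBle : B.trace ≤ Real.sqrt (t * s) :=
    (Real.le_sqrt hBtr0 (mul_nonneg ht0 hs0)).mpr hCS
  calc Real.sqrt (2 * lam1 * lam2) * ∑ i, singVal W i
      = Real.sqrt (2 * lam1 * lam2) * B.trace := by rw [hBtr]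
    _ ≤ Real.sqrt (2 * lam1 * lam2) * Real.sqrt (t * s) := by
        exact mul_le_mul_of_nonneg_left hBle (Real.sqrt_nonneg _)
    _ = Real.sqrt (2 * lam1 * lam2 * (t * s)) := by
        rw [← Real.sqrt_mul (by positivity)]
    _ ≤ (lam1 / 2) * t + lam2 * s := by
        have h4 : 2 * lam1 * lam2 * (t * s) ≤ ((lam1 / 2) * t + lam2 * s) ^ 2 := by
          nlinarith [sq_nonneg ((lam1 / 2) * t - lam2 * s)]
        calc Real.sqrt (2 * lam1 * lam2 * (t * s))
            ≤ Real.sqrt (((lam1 / 2) * t + lam2 * s) ^ 2) := Real.sqrt_le_sqrt h4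
          _ = (lam1 / 2) * t + lam2 * s := Real.sqrt_sq (by positivity)

/-- the infimum over symmetric positive definite Ω of
(λ₁/2)·tr(W Ω⁻¹ Wᵀ) + λ₂·tr(Ω) equals √(2λ₁λ₂) times the trace norm of W. -/
theorem stmt15 {d m : ℕ} (W : Matrix (Fin d) (Fin m) ℝ) (lam1 lam2 : ℝ)
    (h1 : 0 < lam1) (h2 : 0 < lam2) :
    sInf {v : ℝ | ∃ Ω : Matrix (Fin m) (Fin m) ℝ, Ω.PosDef ∧
        v = (lam1 / 2) * (W * Ω⁻¹ * Wᵀ).trace + lam2 * Ω.trace}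
      = Real.sqrt (2 * lam1 * lam2) * ∑ i, singVal W i := by
  set T := Real.sqrt (2 * lam1 * lam2) * ∑ i, singVal W i with hTdef
  set Sset := {v : ℝ | ∃ Ω : Matrix (Fin m) (Fin m) ℝ, Ω.PosDef ∧
        v = (lam1 / 2) * (W * Ω⁻¹ * Wᵀ).trace + lam2 * Ω.trace} with hSset
  have hlb : ∀ v ∈ Sset, T ≤ v := by
    rintro v ⟨Ω, hΩ, rfl⟩
    exact stmt15_lb W lam1 lam2 h1 h2 Ω hΩ
  have hne : Sset.Nonempty := ⟨_, ⟨1, Matrix.PosDef.one, rfl⟩⟩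
  have hbdd : BddBelow Sset := ⟨T, hlb⟩
  -- upper bound part
  have hub : ∀ δ > (0:ℝ), ∃ v ∈ Sset, v ≤ T + δ := by
    intro δ hδ
    have hH := isHermitian_transpose_mul W
    set μ := hH.eigenvalues with hμdef
    have hμ0 : ∀ i, 0 ≤ μ i := by
      intro i
      have hA : (Wᵀ * W).PosSemidef := by simpa using W.posSemidef_conjTranspose_mul_self
      exact hA.eigenvalues_nonneg i
    set c := Real.sqrt (lam1 / (2 * lam2)) with hcdef
    have hc : 0 < c := Real.sqrt_pos.mpr (by positivity)
    have hc2 : c ^ 2 = lam1 / (2 * lam2) := Real.sq_sqrt (by positivity)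
    set ε := δ / (lam2 * c * m + 1) with hεdef
    have hε : 0 < ε := by positivity
    set σ := fun i => singVal W i with hσdef
    have hσ0 : ∀ i, 0 ≤ σ i := fun i => Real.sqrt_nonneg _
    have hσsq : ∀ i, σ i ^ 2 = μ i := fun i => Real.sq_sqrt (hμ0 i)
    set ω := fun i => c * (σ i + ε) with hωdef
    have hω : ∀ i, 0 < ω i := fun i => by
      have := hσ0 i; dsimp [ω]; positivity
    set V := (hH.eigenvectorUnitary : Matrix (Fin m) (Fin m) ℝ) with hVdef
    have hVV : V * star V = 1 := Matrix.mem_unitaryGroup_iff.mp hH.eigenvectorUnitary.2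
    have hV'V : star V * V = 1 := Matrix.mem_unitaryGroup_iff'.mp hH.eigenvectorUnitary.2
    have hspec : Wᵀ * W = V * diagonal μ * star V := by
      have := hH.spectral_theorem
      simpa using this
    set Ω := V * diagonal ω * star V with hΩdef
    have hΩ : Ω.PosDef := posDef_conj (Matrix.PosDef.diagonal hω) V hVV
    have hΩinv : Ω⁻¹ = V * diagonal (fun i => (ω i)⁻¹) * star V := by
      apply Matrix.inv_eq_right_inv
      have hDD : diagonal ω * diagonal (fun i => (ω i)⁻¹) = (1 : Matrix (Fin m) (Fin m) ℝ) := by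
        have h1' : (fun i => ω i * (ω i)⁻¹) = fun _ => (1:ℝ) :=
          funext fun i => mul_inv_cancel₀ (hω i).ne'
        rw [Matrix.diagonal_mul_diagonal, h1', Matrix.diagonal_one]
      show (V * diagonal ω * star V) * (V * diagonal (fun i => (ω i)⁻¹) * star V) = 1
      rw [unitary_conj_mul V _ _ hV'V, hDD, Matrix.mul_one, hVV]
    have htr1 : (W * Ω⁻¹ * Wᵀ).trace = ∑ i, μ i * (ω i)⁻¹ := by
      rw [Matrix.trace_mul_cycle, hspec, hΩinv, unitary_conj_mul V _ _ hV'V,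
        trace_conj _ _ hV'V, Matrix.diagonal_mul_diagonal, Matrix.trace_diagonal]
    have htr2 : Ω.trace = ∑ i, ω i := by
      rw [hΩdef, trace_conj _ _ hV'V, Matrix.trace_diagonal]
    refine ⟨_, ⟨Ω, hΩ, rfl⟩, ?_⟩
    rw [htr1, htr2]
    -- pointwise bound : μ i * (ω i)⁻¹ ≤ σ i / c
    have hpt : ∀ i, μ i * (ω i)⁻¹ ≤ σ i / c := by
      intro i
      have hωi := hω i
      rw [← hσsq i, div_eq_mul_inv, mul_inv_le_iff₀ hωi]
      have he : σ i * c⁻¹ * ω i = σ i * (σ i + ε) := by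
        simp only [hωdef]
        field_simp
      rw [he]
      nlinarith [hσ0 i, hε.le]
    have hsum1 : ∑ i, μ i * (ω i)⁻¹ ≤ ∑ i, σ i / c :=
      Finset.sum_le_sum fun i _ => hpt i
    have hωsum : ∑ i, ω i = c * (∑ i, σ i) + c * ε * m := by
      have : ∀ i : Fin m, ω i = c * σ i + c * ε := fun i => by
        simp only [hωdef]; ring
      simp only [this]
      rw [Finset.sum_add_distrib, ← Finset.mul_sum, Finset.sum_const, Finset.card_univ,
        Fintype.card_fin, nsmul_eq_mul]
      ring
    have h2c : 2 * lam2 * c = Real.sqrt (2 * lam1 * lam2) := by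
      rw [show (2:ℝ) * lam1 * lam2 = (2 * lam2 * c) ^ 2 by
        rw [mul_pow, mul_pow, hc2]; field_simp]
      rw [Real.sqrt_sq (by positivity)]
    have hεm : lam2 * (c * ε * m) ≤ δ := by
      have hden : (0:ℝ) < lam2 * c * m + 1 := by positivity
      rw [hεdef]
      rw [show lam2 * (c * (δ / (lam2 * c * ↑m + 1)) * ↑m)
          = lam2 * c * ↑m * δ / (lam2 * c * ↑m + 1) by ring]
      rw [div_le_iff₀ hden]
      nlinarith [hδ.le, mul_nonneg (mul_nonneg h2.le hc.le) (Nat.cast_nonneg m)]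
    have hl : lam1 = 2 * lam2 * c ^ 2 := by
      rw [hc2]; field_simp
    have hlamc : lam1 / 2 * (∑ i, σ i / c) = lam2 * c * ∑ i, σ i := by
      rw [← Finset.sum_div, hl]
      field_simp
    have hTσ : T = (2 * lam2 * c) * ∑ i, σ i := by
      rw [hTdef, ← h2c]
    calc lam1 / 2 * (∑ i, μ i * (ω i)⁻¹) + lam2 * ∑ i, ω i
        ≤ lam1 / 2 * (∑ i, σ i / c) + lam2 * (c * (∑ i, σ i) + c * ε * m) := by
          rw [hωsum]
          have := mul_le_mul_of_nonneg_left hsum1 (by positivity : (0:ℝ) ≤ lam1 / 2)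
          linarith
      _ = (2 * lam2 * c) * ∑ i, σ i + lam2 * (c * ε * m) := by
          rw [hlamc]; ring
      _ ≤ T + δ := by
          rw [hTσ]
          linarith [hεm]
  apply le_antisymm
  · apply le_of_forall_pos_le_add
    intro δ hδ
    obtain ⟨v, hv, hvle⟩ := hub δ hδ
    exact (csInf_le hbdd hv).trans hvle
  · exact le_csInf hne hlb
end
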